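/- Let G be a locally compact abelian group, Λ a lattice in G with annihilator Λ^⊥ ⊆ Ĝ, and X = (G/Λ) × (Ĝ/Λ^⊥). Define E_{G,Λ} as the quotient of G × Ĝ × ℂ by the equivalence relation (x,ω,z) ∼ (xλ, ωτ, ω(λ)̄·z) for λ ∈ Λ, τ ∈ Λ^⊥, with projection π([x,ω,z]) = ([x],[ω]). Then π : E_{G,Λ} → X is a complex line bundle: it is locally trivial, with local trivializations over the open sets U_B = {([b],[ω]) : b ∈ B°, ω ∈ Ĝ} for fundamental domains B, given by h([x,ω,z]) = ([x],[ω], ω(⌊x⌋_B)z). -/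

import Mathlib

/-- `B` is a fundamental domain for the subgroup `Λ` in `G`. -/
def IsFundDomain {G : Type*} [Group G] (Λ : Subgroup G) (B : Set G) : Prop :=
  ∀ x : G, ∃! p : B × Λ, x = (p.1 : G) * (p.2 : G)

/-- The annihilator `Λ^⊥ ⊆ Ĝ` of a subgroup `Λ ⊆ G`. -/
def annih {G : Type*} [CommGroup G] [TopologicalSpace G] [IsTopologicalGroup G]
    (Λ : Subgroup G) : Subgroup (PontryaginDual G) where
  carrier := {ω | ∀ l ∈ Λ, ω l = 1}
  one_mem' := by intro l _; rfl
  mul_mem' := by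
    intro a b ha hb l hl
    have : (a * b) l = a l * b l := rfl
    rw [this, ha l hl, hb l hl, mul_one]
  inv_mem' := by
    intro a ha l hl
    have : (a⁻¹ : PontryaginDual _) l = (a l)⁻¹ := rfl
    rw [this, ha l hl, inv_one]

/-- The relation on `G × Ĝ × ℂ` defining the Heisenberg line bundle `E_{G,Λ}`:
`(x,ω,z) ∼ (xλ, ωτ, conj(ω(λ))·z)` for `λ ∈ Λ`, `τ ∈ Λ^⊥`. -/
def heisRel {G : Type*} [CommGroup G] [TopologicalSpace G] [IsTopologicalGroup G]
    (Λ : Subgroup G) :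
    (G × PontryaginDual G × ℂ) → (G × PontryaginDual G × ℂ) → Prop :=
  fun p q => ∃ (l : Λ) (τ : annih Λ),
    q.1 = p.1 * l ∧ q.2.1 = p.2.1 * (τ : PontryaginDual G) ∧
    q.2.2 = (starRingEnd ℂ) ((p.2.1 (l : G) : ℂ)) * p.2.2

/-- The open subset `U_B ⊆ X = (G/Λ) × (Ĝ/Λ^⊥)` determined by a fundamental domain `B`. -/
def UB {G : Type*} [CommGroup G] [TopologicalSpace G] [IsTopologicalGroup G]
    (Λ : Subgroup G) (B : Set G) :
    Set ((G ⧸ Λ) × (PontryaginDual G ⧸ annih Λ)) :=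
  {q | ∃ b ∈ interior B, ∃ ω : PontryaginDual G,
    q = (QuotientGroup.mk b, QuotientGroup.mk ω)}


section Aux

variable {G : Type*} [CommGroup G] [TopologicalSpace G] [IsTopologicalGroup G]

lemma circ_mul_conj (c : Circle) : (c : ℂ) * (starRingEnd ℂ) (c : ℂ) = 1 := by
  rw [← Circle.coe_inv_eq_conj, ← Circle.coe_mul, mul_inv_cancel, Circle.coe_one]

lemma circ_conj_mul (c : Circle) : (starRingEnd ℂ) (c : ℂ) * (c : ℂ) = 1 := by
  rw [mul_comm]; exact circ_mul_conj c

lemma annih_apply {Λ : Subgroup G} (τ : annih Λ) {g : G} (hg : g ∈ Λ) :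
    (τ : PontryaginDual G) g = 1 := τ.2 g hg

lemma pd_mul_apply (ω τ : PontryaginDual G) (g : G) : (ω * τ) g = ω g * τ g := rfl

lemma heisRel_equivalence (Λ : Subgroup G) : Equivalence (heisRel Λ) := by
  constructor
  · intro p
    refine ⟨1, 1, by simp, by simp, by simp [map_one]⟩
  · rintro ⟨x, ω, z⟩ ⟨x', ω', z'⟩ ⟨l, τ, h1, h2, h3⟩
    dsimp only at h1 h2 h3
    refine ⟨l⁻¹, τ⁻¹, ?_, ?_, ?_⟩
    · dsimp only; rw [h1]; simp [mul_assoc]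
    · dsimp only; rw [h2]; simp [mul_assoc]
    · dsimp only
      have e1 : ((ω' ((l⁻¹ : Λ) : G)) : ℂ) = (starRingEnd ℂ) ((ω ((l : Λ) : G)) : ℂ) := by
        have hl : ((l⁻¹ : Λ) : G) = ((l : Λ) : G)⁻¹ := rfl
        rw [hl, h2, pd_mul_apply, annih_apply τ (inv_mem l.2), mul_one, map_inv,
          Circle.coe_inv_eq_conj]
      rw [e1, Complex.conj_conj, h3, ← mul_assoc, circ_mul_conj, one_mul]
  · rintro ⟨x, ω, z⟩ ⟨x', ω', z'⟩ ⟨x'', ω'', z''⟩ ⟨l, τ, h1, h2, h3⟩ ⟨l', τ', h1', h2', h3'⟩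
    dsimp only at h1 h2 h3 h1' h2' h3'
    refine ⟨l * l', τ * τ', ?_, ?_, ?_⟩
    · dsimp only; rw [h1', h1]; simp [mul_assoc]
    · dsimp only; rw [h2', h2]; simp [mul_assoc]
    · dsimp only
      have e2 : ((ω (((l : Λ) : G) * ((l' : Λ) : G))) : ℂ)
          = ((ω ((l : Λ) : G)) : ℂ) * ((ω ((l' : Λ) : G)) : ℂ) := by
        rw [map_mul, Circle.coe_mul]
      have hc : (((l * l' : Λ) : G)) = ((l : Λ) : G) * ((l' : Λ) : G) := rfl
      rw [h3', h3, h2, pd_mul_apply, annih_apply τ l'.2, mul_one, hc, e2, map_mul]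
      ring

end Aux
section Aux2

variable {G : Type*} [CommGroup G] [TopologicalSpace G] [IsTopologicalGroup G]

lemma continuous_pd_eval (g : G) :
    Continuous fun ω : PontryaginDual G => ((ω g : Circle) : ℂ) := by
  have h1 : Continuous fun ω : ContinuousMonoidHom G Circle => ω g :=
    ContinuousEvalConst.continuous_eval_const g
  exact continuous_induced_dom.comp h1

lemma heis_mk_eq {Λ : Subgroup G} {p q : G × PontryaginDual G × ℂ} :
    Quot.mk (heisRel Λ) p = Quot.mk (heisRel Λ) q ↔ heisRel Λ p q := by
  rw [Quot.eq]
  exact (heisRel_equivalence Λ).eqvGen_iff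

/-- The continuous "untranslation" map. -/
private noncomputable def psiMap (Λ : Subgroup G) (l : Λ) (τ : annih Λ) :
    G × PontryaginDual G × ℂ → G × PontryaginDual G × ℂ :=
  fun p => (p.1 * ((l : G))⁻¹, p.2.1 * ((τ : PontryaginDual G))⁻¹,
    ((p.2.1 (l : G) : Circle) : ℂ) * p.2.2)

lemma continuous_psiMap (Λ : Subgroup G) (l : Λ) (τ : annih Λ) :
    Continuous (psiMap Λ l τ) := by
  refine Continuous.prodMk (continuous_fst.mul continuous_const) (Continuous.prodMk
    ((continuous_fst.comp continuous_snd).mul continuous_const) ?_)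
  exact (((continuous_pd_eval ((l : G))).comp (continuous_fst.comp continuous_snd)).mul
    (continuous_snd.comp continuous_snd))

lemma heisRel_iff_psi (Λ : Subgroup G) (l : Λ) (τ : annih Λ)
    (u p : G × PontryaginDual G × ℂ) :
    (p.1 = u.1 * l ∧ p.2.1 = u.2.1 * (τ : PontryaginDual G) ∧
      p.2.2 = (starRingEnd ℂ) ((u.2.1 (l : G) : ℂ)) * u.2.2) ↔ psiMap Λ l τ p = u := by
  constructor
  · rintro ⟨h1, h2, h3⟩
    have e1 : p.2.1 (l : G) = u.2.1 (l : G) := by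
      rw [h2, pd_mul_apply, annih_apply τ l.2, mul_one]
    refine Prod.ext ?_ (Prod.ext ?_ ?_)
    · show p.1 * ((l : G))⁻¹ = u.1; rw [h1, mul_inv_cancel_right]
    · show p.2.1 * ((τ : PontryaginDual G))⁻¹ = u.2.1; rw [h2, mul_inv_cancel_right]
    · show ((p.2.1 (l : G) : Circle) : ℂ) * p.2.2 = u.2.2
      rw [h3, e1, ← mul_assoc, circ_mul_conj, one_mul]
  · rintro rfl
    dsimp only [psiMap]
    have e1 : (p.2.1 * ((τ : PontryaginDual G))⁻¹) (l : G) = p.2.1 (l : G) := by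
      have h0 : ((τ : PontryaginDual G))⁻¹ (l : G) = ((τ : PontryaginDual G) (l : G))⁻¹ := rfl
      rw [pd_mul_apply, h0, annih_apply τ l.2, inv_one, mul_one]
    refine ⟨by rw [inv_mul_cancel_right], by rw [inv_mul_cancel_right], ?_⟩
    rw [e1, ← mul_assoc, circ_conj_mul, one_mul]

lemma isOpenMap_heis_mk (Λ : Subgroup G) : IsOpenMap (Quot.mk (heisRel Λ)) := by
  intro U hU
  rw [isOpen_coinduced]
  have hset : Quot.mk (heisRel Λ) ⁻¹' (Quot.mk (heisRel Λ) '' U) =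
      ⋃ (l : Λ) (τ : annih Λ), (psiMap Λ l τ) ⁻¹' U := by
    ext p
    simp only [Set.mem_preimage, Set.mem_image, Set.mem_iUnion]
    constructor
    · rintro ⟨u, huU, hmk⟩
      obtain ⟨l, τ, hrel⟩ := heis_mk_eq.mp hmk
      exact ⟨l, τ, by rwa [(heisRel_iff_psi Λ l τ u p).mp hrel]⟩
    · rintro ⟨l, τ, hp⟩
      refine ⟨psiMap Λ l τ p, hp, heis_mk_eq.mpr ⟨l, τ, ?_⟩⟩
      exact (heisRel_iff_psi Λ l τ (psiMap Λ l τ p) p).mpr rfl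
  rw [hset]
  exact isOpen_iUnion fun l => isOpen_iUnion fun τ => hU.preimage (continuous_psiMap Λ l τ)

end Aux2
section Aux3

variable {G : Type*} [CommGroup G] [TopologicalSpace G] [IsTopologicalGroup G]

lemma fund_floor_unique {Λ : Subgroup G} {B : Set G} (hB : IsFundDomain Λ B)
    {x : G} {l l' : Λ} (h : x * ((l : G))⁻¹ ∈ B) (h' : x * ((l' : G))⁻¹ ∈ B) : l = l' := by
  obtain ⟨p, _, hu⟩ := hB x
  have e1 : (⟨⟨x * ((l : G))⁻¹, h⟩, l⟩ : B × Λ) = p := hu _ (by simp)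
  have e2 : (⟨⟨x * ((l' : G))⁻¹, h'⟩, l'⟩ : B × Λ) = p := hu _ (by simp)
  exact congrArg Prod.snd (e1.trans e2.symm)

lemma isFundDomain_of_reps {Λ : Subgroup G} {B : Set G}
    (hex : ∀ y : G, ∃ b ∈ B, (QuotientGroup.mk b : G ⧸ Λ) = QuotientGroup.mk y)
    (huniq : ∀ b ∈ B, ∀ b' ∈ B, (QuotientGroup.mk b : G ⧸ Λ) = QuotientGroup.mk b' → b = b') :
    IsFundDomain Λ B := by
  intro y
  obtain ⟨b, hbB, hmk⟩ := hex y
  have hl : b⁻¹ * y ∈ Λ := QuotientGroup.eq.mp hmk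
  refine ⟨(⟨b, hbB⟩, ⟨b⁻¹ * y, hl⟩), ?_, ?_⟩
  · show y = b * (b⁻¹ * y); rw [mul_inv_cancel_left]
  · rintro ⟨⟨b', hb'⟩, lam⟩ hy
    have hyv : y = b' * (lam : G) := hy
    have hmk' : (QuotientGroup.mk b' : G ⧸ Λ) = QuotientGroup.mk y :=
      QuotientGroup.eq.mpr (by rw [hyv, inv_mul_cancel_left]; exact lam.2)
    have hbb : b' = b := huniq b' hb' b hbB (hmk'.trans hmk.symm)
    refine Prod.ext (Subtype.ext hbb) (Subtype.ext ?_)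
    show (lam : G) = b⁻¹ * y
    rw [hyv, hbb, inv_mul_cancel_left]

lemma exists_fundDomain_mem_interior (Λ : Subgroup G) [DiscreteTopology Λ] (x : G) :
    ∃ B : Set G, IsFundDomain Λ B ∧ x ∈ interior B := by
  obtain ⟨V, hVopen, hVpre⟩ := isOpen_induced_iff.mp (isOpen_discrete ({1} : Set Λ))
  have h1V : (1 : G) ∈ V := by
    have h : (1 : Λ) ∈ (Subtype.val ⁻¹' V : Set Λ) := by rw [hVpre]; rfl
    exact h
  have hVΛ : ∀ l : Λ, (l : G) ∈ V → l = 1 := by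
    intro l hl
    have h : l ∈ (Subtype.val ⁻¹' V : Set Λ) := hl
    rwa [hVpre] at h
  obtain ⟨W, hWopen, h1W, hWW⟩ := exists_open_nhds_one_mul_subset (hVopen.mem_nhds h1V)
  set U := W ∩ W⁻¹ with hU
  have hUopen : IsOpen U := hWopen.inter hWopen.inv
  have h1U : (1 : G) ∈ U := ⟨h1W, by simpa using h1W⟩
  have hUdiff : ∀ u1 ∈ U, ∀ u2 ∈ U, u1⁻¹ * u2 ∈ V := by
    intro u1 hu1 u2 hu2
    exact hWW (Set.mul_mem_mul (Set.mem_inv.mp hu1.2) hu2.1)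
  set A := (fun u => x * u) '' U with hA
  have hAopen : IsOpen A := (isOpenMap_mul_left x) U hUopen
  have hxA : x ∈ A := ⟨1, h1U, mul_one x⟩
  have hAinj : ∀ a ∈ A, ∀ a' ∈ A,
      (QuotientGroup.mk a : G ⧸ Λ) = QuotientGroup.mk a' → a = a' := by
    rintro a ⟨u, huU, rfl⟩ a' ⟨u', hu'U, rfl⟩ hmk
    have hmem : (x * u)⁻¹ * (x * u') ∈ Λ := QuotientGroup.eq.mp hmk
    have heq : (x * u)⁻¹ * (x * u') = u⁻¹ * u' := by
      rw [mul_inv_rev, mul_assoc, inv_mul_cancel_left, mul_comm]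
    have hlV : (((⟨_, hmem⟩ : Λ)) : G) ∈ V := by
      show (x * u)⁻¹ * (x * u') ∈ V
      rw [heq]; exact hUdiff u huU u' hu'U
    have h1 := hVΛ _ hlV
    have hval : (x * u)⁻¹ * (x * u') = 1 := congrArg Subtype.val h1
    exact inv_mul_eq_one.mp hval
  set S : Set (G ⧸ Λ) := {q | ∀ a ∈ A, (QuotientGroup.mk a : G ⧸ Λ) ≠ q} with hS
  set B := A ∪ (fun q : G ⧸ Λ => Quotient.out q) '' S with hB
  refine ⟨B, isFundDomain_of_reps ?_ ?_, interior_maximal Set.subset_union_left hAopen hxA⟩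
  · intro y
    by_cases hc : ∃ a ∈ A, (QuotientGroup.mk a : G ⧸ Λ) = QuotientGroup.mk y
    · obtain ⟨a, ha, hmk⟩ := hc
      exact ⟨a, Or.inl ha, hmk⟩
    · push_neg at hc
      exact ⟨Quotient.out (QuotientGroup.mk y), Or.inr ⟨_, hc, rfl⟩, QuotientGroup.out_eq' _⟩
  · rintro b hb b' hb' hmk
    rcases hb with hbA | ⟨q, hqS, rfl⟩
    · rcases hb' with hb'A | ⟨q', hq'S, rfl⟩
      · exact hAinj b hbA b' hb'A hmk
      · exact absurd (hmk.trans (QuotientGroup.out_eq' q')) (hq'S b hbA)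
    · rcases hb' with hb'A | ⟨q', hq'S, rfl⟩
      · exact absurd (hmk.symm.trans (QuotientGroup.out_eq' q)) (hqS b' hb'A)
      · have hqq : q = q' := (QuotientGroup.out_eq' q).symm.trans (hmk.trans (QuotientGroup.out_eq' q'))
        rw [hqq]

end Aux3
section Aux4

lemma continuousAt_of_openMap_comp {α β γ : Type*} [TopologicalSpace α] [TopologicalSpace β]
    [TopologicalSpace γ] {ρ : α → β} {k : β → γ} {f : α → γ} (hρ : IsOpenMap ρ)
    (hk : ∀ a, k (ρ a) = f a) {a : α} (hf : ContinuousAt f a) : ContinuousAt k (ρ a) := by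
  rw [ContinuousAt, Filter.tendsto_def]
  intro W hW
  have hW' : W ∈ nhds (f a) := by rwa [hk a] at hW
  have hfW : f ⁻¹' W ∈ nhds a := hf hW'
  obtain ⟨N, hNsub, hNopen, haN⟩ := mem_nhds_iff.mp hfW
  refine Filter.mem_of_superset ((hρ N hNopen).mem_nhds ⟨a, haN, rfl⟩) ?_
  rintro _ ⟨b, hbN, rfl⟩
  show k (ρ b) ∈ W
  rw [hk b]
  exact hNsub hbN

variable {G : Type*} [CommGroup G] [TopologicalSpace G] [IsTopologicalGroup G]

lemma fl_shift {Λ : Subgroup G} {B : Set G} (hB : IsFundDomain Λ B) {fl : G → Λ}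
    (hfl : ∀ x : G, x * ((fl x : G))⁻¹ ∈ B) (x : G) (l : Λ) :
    fl (x * (l : G)) = fl x * l := by
  apply fund_floor_unique hB (hfl (x * (l : G)))
  have e : x * (l : G) * (((fl x * l : Λ) : G))⁻¹ = x * ((fl x : G))⁻¹ := by
    have hc : ((fl x * l : Λ) : G) = ((fl x : Λ) : G) * (l : G) := rfl
    rw [hc, mul_inv_rev, ← mul_assoc, mul_inv_cancel_right]
  rw [e]
  exact hfl x

/-- The trivialization map upstairs. -/
noncomputable def heisF {G : Type*} [CommGroup G] [TopologicalSpace G] [IsTopologicalGroup G]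
    (Λ : Subgroup G) (fl : G → Λ) :
    G × PontryaginDual G × ℂ → ((G ⧸ Λ) × (PontryaginDual G ⧸ annih Λ)) × ℂ :=
  fun p => ((QuotientGroup.mk p.1, QuotientGroup.mk p.2.1),
    ((p.2.1 ((fl p.1 : Λ) : G) : Circle) : ℂ) * p.2.2)

/-- The inverse map upstairs. -/
noncomputable def heisK {G : Type*} [CommGroup G] [TopologicalSpace G] [IsTopologicalGroup G]
    (Λ : Subgroup G) (fl : G → Λ) :
    G × PontryaginDual G × ℂ → Quot (heisRel Λ) :=
  fun p => Quot.mk (heisRel Λ) (p.1, p.2.1,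
    (starRingEnd ℂ) ((p.2.1 ((fl p.1 : Λ) : G) : Circle) : ℂ) * p.2.2)

end Aux4
section Aux5

variable {G : Type*} [CommGroup G] [TopologicalSpace G] [IsTopologicalGroup G]

lemma heisF_resp {Λ : Subgroup G} {B : Set G} (hBfd : IsFundDomain Λ B) {fl : G → Λ}
    (hfl : ∀ x : G, x * ((fl x : G))⁻¹ ∈ B) :
    ∀ p q, heisRel Λ p q → heisF Λ fl p = heisF Λ fl q := by
  rintro ⟨x, ω, z⟩ ⟨x', ω', z'⟩ ⟨l, τ, h1, h2, h3⟩
  dsimp only at h1 h2 h3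
  subst h1; subst h2; subst h3
  dsimp only [heisF]
  refine Prod.ext (Prod.ext ?_ ?_) ?_
  · exact QuotientGroup.eq.mpr (by rw [inv_mul_cancel_left]; exact l.2)
  · exact QuotientGroup.eq.mpr (by rw [inv_mul_cancel_left]; exact τ.2)
  · show ((ω ((fl x : Λ) : G) : Circle) : ℂ) * z = _
    rw [fl_shift hBfd hfl x l]
    have e1 : (((ω * (τ : PontryaginDual G)) ((fl x * l : Λ) : G) : Circle) : ℂ)
        = ((ω ((fl x : Λ) : G) : Circle) : ℂ) * ((ω ((l : Λ) : G) : Circle) : ℂ) := by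
      rw [pd_mul_apply, annih_apply τ (fl x * l).2, mul_one]
      have hc : ((fl x * l : Λ) : G) = ((fl x : Λ) : G) * ((l : Λ) : G) := rfl
      rw [hc, map_mul, Circle.coe_mul]
    have e2 : ((ω ((l : Λ) : G) : Circle) : ℂ)
        * ((starRingEnd ℂ) ((ω ((l : Λ) : G) : Circle) : ℂ) * z) = z := by
      rw [← mul_assoc, circ_mul_conj, one_mul]
    rw [e1, mul_assoc, e2]

lemma heisK_inv {Λ : Subgroup G} {B : Set G} (hBfd : IsFundDomain Λ B) {fl : G → Λ}
    (hfl : ∀ x : G, x * ((fl x : G))⁻¹ ∈ B) (x : G) (ω : PontryaginDual G) (z : ℂ)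
    (l : Λ) (τ : annih Λ) :
    heisK Λ fl (x * (l : G), ω * (τ : PontryaginDual G), z) = heisK Λ fl (x, ω, z) := by
  dsimp only [heisK]
  refine (heis_mk_eq.mpr ⟨l, τ, rfl, rfl, ?_⟩).symm
  dsimp only
  rw [fl_shift hBfd hfl x l]
  have e1 : (((ω * (τ : PontryaginDual G)) ((fl x * l : Λ) : G) : Circle) : ℂ)
      = ((ω ((fl x : Λ) : G) : Circle) : ℂ) * ((ω ((l : Λ) : G) : Circle) : ℂ) := by
    rw [pd_mul_apply, annih_apply τ (fl x * l).2, mul_one]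
    have hc : ((fl x * l : Λ) : G) = ((fl x : Λ) : G) * ((l : Λ) : G) := rfl
    rw [hc, map_mul, Circle.coe_mul]
  rw [e1, map_mul]
  ring

end Aux5
/-- The quotient `E_{G,Λ} = (G × Ĝ × ℂ)/∼` with projection
`π([x,ω,z]) = ([x],[ω])` is a complex line bundle over `X = (G/Λ) × (Ĝ/Λ^⊥)`: `π` is
continuous, the sets `U_B` (over fundamental domains `B`) form an open cover of `X`, and
over each `U_B` the map `h([x,ω,z]) = ([x],[ω], ω(⌊x⌋_B)·z)` is a homeomorphic (fiberwise
linear) trivialization of `π⁻¹(U_B)`. -/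
theorem heisenberg_line_bundle_locally_trivial
    {G : Type*} [CommGroup G] [TopologicalSpace G] [IsTopologicalGroup G]
    [LocallyCompactSpace G] [T2Space G] [SecondCountableTopology G]
    (Λ : Subgroup G) [DiscreteTopology Λ] [CompactSpace (G ⧸ Λ)]
    (π : Quot (heisRel Λ) → (G ⧸ Λ) × (PontryaginDual G ⧸ annih Λ))
    (hπ : ∀ (x : G) (ω : PontryaginDual G) (z : ℂ),
      π (Quot.mk (heisRel Λ) (x, ω, z)) = (QuotientGroup.mk x, QuotientGroup.mk ω)) :
    Continuous π ∧
    (∀ B : Set G, IsFundDomain Λ B → IsOpen (UB Λ B)) ∧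
    (⋃ B ∈ {B : Set G | IsFundDomain Λ B}, UB Λ B) = Set.univ ∧
    (∀ (B : Set G), IsFundDomain Λ B →
      ∀ (fl : G → Λ), (∀ x : G, x * ((fl x : G))⁻¹ ∈ B) →
      ∃ h : Quot (heisRel Λ) → ((G ⧸ Λ) × (PontryaginDual G ⧸ annih Λ)) × ℂ,
        (∀ (x : G) (ω : PontryaginDual G) (z : ℂ),
          h (Quot.mk (heisRel Λ) (x, ω, z)) =
            ((QuotientGroup.mk x, QuotientGroup.mk ω), ((ω (fl x : G) : ℂ)) * z)) ∧
        ContinuousOn h (π ⁻¹' UB Λ B) ∧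
        Set.BijOn h (π ⁻¹' UB Λ B) ((UB Λ B) ×ˢ (Set.univ : Set ℂ)) ∧
        (∃ k : ((G ⧸ Λ) × (PontryaginDual G ⧸ annih Λ)) × ℂ → Quot (heisRel Λ),
          ContinuousOn k ((UB Λ B) ×ˢ (Set.univ : Set ℂ)) ∧
          (∀ e ∈ π ⁻¹' UB Λ B, k (h e) = e) ∧
          (∀ q ∈ (UB Λ B) ×ˢ (Set.univ : Set ℂ), h (k q) = q))) := by
  classical
  have hcontπ : Continuous π := by
    rw [isQuotientMap_quot_mk.continuous_iff]
    have he : (π ∘ Quot.mk (heisRel Λ)) = fun p : G × PontryaginDual G × ℂ =>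
        ((QuotientGroup.mk p.1 : G ⧸ Λ),
          (QuotientGroup.mk p.2.1 : PontryaginDual G ⧸ annih Λ)) := by
      funext p
      exact hπ p.1 p.2.1 p.2.2
    rw [he]
    exact (QuotientGroup.continuous_mk.comp continuous_fst).prodMk
      (QuotientGroup.continuous_mk.comp (continuous_fst.comp continuous_snd))
  have hUBopen : ∀ B : Set G, IsOpen (UB Λ B) := by
    intro B
    have he : UB Λ B = (QuotientGroup.mk '' interior B) ×ˢ
        (Set.univ : Set (PontryaginDual G ⧸ annih Λ)) := by
      ext q
      constructor
      · rintro ⟨b, hb, ω, rfl⟩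
        exact ⟨⟨b, hb, rfl⟩, trivial⟩
      · rintro ⟨⟨b, hb, hq1⟩, -⟩
        refine ⟨b, hb, Quotient.out q.2, ?_⟩
        rw [Prod.ext_iff]
        exact ⟨hq1.symm, (QuotientGroup.out_eq' q.2).symm⟩
    rw [he]
    exact ((QuotientGroup.isOpenMap_coe) _ isOpen_interior).prod isOpen_univ
  have hcover : (⋃ B ∈ {B : Set G | IsFundDomain Λ B}, UB Λ B) = Set.univ := by
    ext q
    simp only [Set.mem_iUnion, Set.mem_univ, iff_true, Set.mem_setOf_eq]
    obtain ⟨B, hBfd, hxB⟩ := exists_fundDomain_mem_interior Λ (Quotient.out q.1)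
    refine ⟨B, hBfd, ⟨Quotient.out q.1, hxB, Quotient.out q.2, ?_⟩⟩
    rw [Prod.ext_iff]
    exact ⟨(QuotientGroup.out_eq' q.1).symm, (QuotientGroup.out_eq' q.2).symm⟩
  refine ⟨hcontπ, fun B _ => hUBopen B, hcover, ?_⟩
  intro B hBfd fl hfl
  -- the key saturation fact
  have hfloor_int : ∀ x : G,
      (∃ b ∈ interior B, (QuotientGroup.mk b : G ⧸ Λ) = QuotientGroup.mk x) ↔
        x * ((fl x : G))⁻¹ ∈ interior B := by
    intro x
    constructor
    · rintro ⟨b, hb, hmk⟩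
      have hl : b⁻¹ * x ∈ Λ := QuotientGroup.eq.mp hmk
      have hxb : x * (((⟨b⁻¹ * x, hl⟩ : Λ) : G))⁻¹ ∈ B := by
        show x * (b⁻¹ * x)⁻¹ ∈ B
        rw [mul_inv_rev, inv_inv, mul_inv_cancel_left]
        exact interior_subset hb
      have hflx := fund_floor_unique hBfd (hfl x) hxb
      have he : x * ((fl x : G))⁻¹ = b := by
        rw [hflx]
        show x * (b⁻¹ * x)⁻¹ = b
        rw [mul_inv_rev, inv_inv, mul_inv_cancel_left]
      rw [he]
      exact hb
    · intro hx
      refine ⟨x * ((fl x : G))⁻¹, hx, QuotientGroup.eq.mpr ?_⟩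
      rw [mul_inv_rev, inv_inv, mul_assoc, inv_mul_cancel, mul_one]
      exact (fl x).2
  have hpre_mk : ∀ p : G × PontryaginDual G × ℂ,
      (Quot.mk (heisRel Λ) p ∈ π ⁻¹' UB Λ B) ↔ p.1 * ((fl p.1 : G))⁻¹ ∈ interior B := by
    intro p
    rw [Set.mem_preimage]
    have he : π (Quot.mk (heisRel Λ) p) =
        (QuotientGroup.mk p.1, QuotientGroup.mk p.2.1) := hπ p.1 p.2.1 p.2.2
    rw [he]
    constructor
    · rintro ⟨b, hb, ω', hq⟩
      rw [Prod.ext_iff] at hq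
      exact (hfloor_int p.1).mp ⟨b, hb, hq.1.symm⟩
    · intro hp
      obtain ⟨b, hb, hmk⟩ := (hfloor_int p.1).mpr hp
      refine ⟨b, hb, p.2.1, ?_⟩
      rw [Prod.ext_iff]
      exact ⟨hmk.symm, rfl⟩
  -- local continuity of heisF
  have hfat : ∀ p : G × PontryaginDual G × ℂ, p.1 * ((fl p.1 : G))⁻¹ ∈ interior B →
      ContinuousAt (heisF Λ fl) p := by
    intro p hp
    set c : G := ((fl p.1 : Λ) : G) with hc
    have hg : Continuous (fun q : G × PontryaginDual G × ℂ =>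
        (((QuotientGroup.mk q.1 : G ⧸ Λ),
          (QuotientGroup.mk q.2.1 : PontryaginDual G ⧸ annih Λ)),
          ((q.2.1 c : Circle) : ℂ) * q.2.2)) := by
      refine Continuous.prodMk (Continuous.prodMk ?_ ?_) ?_
      · exact QuotientGroup.continuous_mk.comp continuous_fst
      · exact QuotientGroup.continuous_mk.comp (continuous_fst.comp continuous_snd)
      · exact ((continuous_pd_eval c).comp (continuous_fst.comp continuous_snd)).mul
          (continuous_snd.comp continuous_snd)
    have hN : {q : G × PontryaginDual G × ℂ | q.1 * c⁻¹ ∈ interior B} ∈ nhds p := by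
      refine IsOpen.mem_nhds ?_ hp
      exact isOpen_interior.preimage (continuous_fst.mul continuous_const)
    refine hg.continuousAt.congr ?_
    filter_upwards [hN] with q hq
    have hfq : fl q.1 = fl p.1 :=
      fund_floor_unique hBfd (hfl q.1) (interior_subset hq)
    dsimp only [heisF]
    rw [hfq]
  have hπUB_open : IsOpen (π ⁻¹' UB Λ B) := (hUBopen B).preimage hcontπ
  have hcontOn_h : ContinuousOn (Quot.lift (heisF Λ fl) (heisF_resp hBfd hfl))
      (π ⁻¹' UB Λ B) := by
    intro t ht
    obtain ⟨p, rfl⟩ := Quot.exists_rep t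
    have hp := (hpre_mk p).mp ht
    exact (continuousAt_of_openMap_comp (isOpenMap_heis_mk Λ)
      (fun _ => rfl) (hfat p hp)).continuousWithinAt
  -- the inverse map k
  set k : ((G ⧸ Λ) × (PontryaginDual G ⧸ annih Λ)) × ℂ → Quot (heisRel Λ) :=
    fun q => heisK Λ fl (Quotient.out q.1.1, Quotient.out q.1.2, q.2) with hk
  have hkK : ∀ (x : G) (ω : PontryaginDual G) (z : ℂ),
      k ((QuotientGroup.mk x, QuotientGroup.mk ω), z) = heisK Λ fl (x, ω, z) := by
    intro x ω z
    obtain ⟨l, hl⟩ := QuotientGroup.mk_out_eq_mul Λ x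
    obtain ⟨τ, hτ⟩ := QuotientGroup.mk_out_eq_mul (annih Λ) ω
    simp only [hk]
    rw [hl, hτ]
    exact heisK_inv hBfd hfl x ω z l τ
  have hKat : ∀ p : G × PontryaginDual G × ℂ, p.1 * ((fl p.1 : G))⁻¹ ∈ interior B →
      ContinuousAt (heisK Λ fl) p := by
    intro p hp
    set c : G := ((fl p.1 : Λ) : G) with hc
    have hg : Continuous (fun q : G × PontryaginDual G × ℂ =>
        Quot.mk (heisRel Λ) (q.1, q.2.1, (starRingEnd ℂ) ((q.2.1 c : Circle) : ℂ) * q.2.2)) := by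
      refine continuous_quot_mk.comp (Continuous.prodMk continuous_fst
        (Continuous.prodMk (continuous_fst.comp continuous_snd) ?_))
      exact (Complex.continuous_conj.comp
        ((continuous_pd_eval c).comp (continuous_fst.comp continuous_snd))).mul
        (continuous_snd.comp continuous_snd)
    have hN : {q : G × PontryaginDual G × ℂ | q.1 * c⁻¹ ∈ interior B} ∈ nhds p := by
      refine IsOpen.mem_nhds ?_ hp
      exact isOpen_interior.preimage (continuous_fst.mul continuous_const)
    refine hg.continuousAt.congr ?_
    filter_upwards [hN] with q hq
    have hfq : fl q.1 = fl p.1 :=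
      fund_floor_unique hBfd (hfl q.1) (interior_subset hq)
    dsimp only [heisK]
    rw [hfq]
  set ρ : G × PontryaginDual G × ℂ → ((G ⧸ Λ) × (PontryaginDual G ⧸ annih Λ)) × ℂ :=
    fun p => ((QuotientGroup.mk p.1, QuotientGroup.mk p.2.1), p.2.2) with hρ
  have hρopen : IsOpenMap ρ := by
    have h1 : IsOpenMap (fun p : G × PontryaginDual G × ℂ =>
        ((QuotientGroup.mk p.1 : G ⧸ Λ),
          ((QuotientGroup.mk p.2.1 : PontryaginDual G ⧸ annih Λ), p.2.2))) :=
      (QuotientGroup.isOpenMap_coe).prodMap ((QuotientGroup.isOpenMap_coe).prodMap IsOpenMap.id)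
    exact ((Homeomorph.prodAssoc (G ⧸ Λ) (PontryaginDual G ⧸ annih Λ) ℂ).symm.isOpenMap).comp h1
  have hkρ : ∀ p : G × PontryaginDual G × ℂ, k (ρ p) = heisK Λ fl p := fun p =>
    hkK p.1 p.2.1 p.2.2
  have hcontOn_k : ContinuousOn k (UB Λ B ×ˢ (Set.univ : Set ℂ)) := by
    rintro q ⟨hq1, -⟩
    obtain ⟨b, hb, ω, hq⟩ := hq1
    have hbfl : b * ((fl b : G))⁻¹ ∈ interior B := by
      have h1 : fl b = 1 := by
        refine fund_floor_unique hBfd (hfl b) ?_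
        show b * ((1 : G))⁻¹ ∈ B
        rw [inv_one, mul_one]
        exact interior_subset hb
      rw [h1]
      show b * ((1 : G))⁻¹ ∈ interior B
      rw [inv_one, mul_one]
      exact hb
    have hρq : ρ (b, ω, q.2) = q := by
      simp only [hρ]
      rw [Prod.ext_iff]
      exact ⟨hq.symm, rfl⟩
    have hca : ContinuousAt k q := by
      rw [← hρq]
      exact continuousAt_of_openMap_comp hρopen hkρ (hKat (b, ω, q.2) hbfl)
    exact hca.continuousWithinAt
  have hkh : ∀ e : Quot (heisRel Λ),
      k (Quot.lift (heisF Λ fl) (heisF_resp hBfd hfl) e) = e := by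
    intro e
    obtain ⟨⟨x, ω, z⟩, rfl⟩ := Quot.exists_rep e
    show k ((QuotientGroup.mk x, QuotientGroup.mk ω),
      ((ω ((fl x : Λ) : G) : Circle) : ℂ) * z) = _
    rw [hkK]
    dsimp only [heisK]
    refine congrArg (Quot.mk (heisRel Λ)) (Prod.ext rfl (Prod.ext rfl ?_))
    show (starRingEnd ℂ) ((ω ((fl x : Λ) : G) : Circle) : ℂ)
      * (((ω ((fl x : Λ) : G) : Circle) : ℂ) * z) = z
    rw [← mul_assoc, circ_conj_mul, one_mul]
  have hhk : ∀ q : ((G ⧸ Λ) × (PontryaginDual G ⧸ annih Λ)) × ℂ,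
      Quot.lift (heisF Λ fl) (heisF_resp hBfd hfl) (k q) = q := by
    intro q
    show heisF Λ fl (Quotient.out q.1.1, Quotient.out q.1.2, _) = q
    dsimp only [heisF]
    refine Prod.ext (Prod.ext ?_ ?_) ?_
    · exact QuotientGroup.out_eq' q.1.1
    · exact QuotientGroup.out_eq' q.1.2
    · show ((Quotient.out q.1.2) ((fl (Quotient.out q.1.1) : Λ) : G) : ℂ) *
        ((starRingEnd ℂ) (((Quotient.out q.1.2) ((fl (Quotient.out q.1.1) : Λ) : G) : Circle) : ℂ)
          * q.2) = q.2
      rw [← mul_assoc, circ_mul_conj, one_mul]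
  have hmapsh : Set.MapsTo (Quot.lift (heisF Λ fl) (heisF_resp hBfd hfl))
      (π ⁻¹' UB Λ B) (UB Λ B ×ˢ (Set.univ : Set ℂ)) := by
    intro e he
    obtain ⟨⟨x, ω, z⟩, rfl⟩ := Quot.exists_rep e
    rw [Set.mem_preimage, hπ x ω z] at he
    exact Set.mem_prod.mpr ⟨he, trivial⟩
  have hmapsk : Set.MapsTo k (UB Λ B ×ˢ (Set.univ : Set ℂ)) (π ⁻¹' UB Λ B) := by
    rintro q ⟨hq1, -⟩
    rw [Set.mem_preimage]
    have he : π (k q) = q.1 := by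
      simp only [hk]
      dsimp only [heisK]
      rw [hπ]
      rw [QuotientGroup.out_eq' q.1.1, QuotientGroup.out_eq' q.1.2]
    rw [he]
    exact hq1
  have hbij : Set.BijOn (Quot.lift (heisF Λ fl) (heisF_resp hBfd hfl))
      (π ⁻¹' UB Λ B) (UB Λ B ×ˢ (Set.univ : Set ℂ)) :=
    Set.InvOn.bijOn ⟨fun e _ => hkh e, fun q _ => hhk q⟩ hmapsh hmapsk
  exact ⟨Quot.lift (heisF Λ fl) (heisF_resp hBfd hfl), fun x ω z => rfl,
    hcontOn_h, hbij, k, hcontOn_k, fun e _ => hkh e, fun q _ => hhk q⟩
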